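/- Let d, κ > 0 and μ_c = κ² + 2√d κ. Define G(u;μ) as the antiderivative of g(u;μ) = u(u(μ-du)/(κ²(u+1)) - 1) with G(0;μ) = 0, and let β(μ) be the larger positive zero of g for μ > μ_c. Then the map μ ↦ G(β(μ);μ) is strictly increasing on (μ_c, ∞). -/

import Mathlib

-- auxiliary positivity lemma: x^2/2 - x + log(x+1) > 0 for x > 0
lemma aux_A_pos {x : ℝ} (hx : 0 < x) : 0 < x^2/2 - x + Real.log (x+1) := by
  have hmono : StrictMonoOn (fun y : ℝ => y^2/2 - y + Real.log (y+1)) (Set.Ici 0) := by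
    have hder : ∀ y : ℝ, 0 ≤ y → HasDerivAt (fun y : ℝ => y^2/2 - y + Real.log (y+1))
        (y - 1 + 1/(y+1)) y := by
      intro y hy
      have hy1 : y + 1 ≠ 0 := by positivity
      have hlog : HasDerivAt (fun u : ℝ => Real.log (u+1)) (1/(y+1)) y := by
        have := (Real.hasDerivAt_log hy1).comp y ((hasDerivAt_id y).add_const 1)
        simpa [one_div, Function.comp_def] using this
      have hpow : HasDerivAt (fun u : ℝ => u^2/2) y y := by
        simpa using (hasDerivAt_pow 2 y).div_const 2
      exact (hpow.sub (hasDerivAt_id y)).add hlog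
    apply strictMonoOn_of_deriv_pos (convex_Ici 0)
    · intro y hy
      exact ((hder y hy).differentiableAt.continuousAt).continuousWithinAt
    · intro y hy
      rw [interior_Ici] at hy
      rw [Set.mem_Ioi] at hy
      rw [(hder y hy.le).deriv]
      have h1p : (0:ℝ) < y + 1 := by linarith
      have hinv : (y + 1) * (1/(y+1)) = 1 := mul_one_div_cancel h1p.ne'
      nlinarith [hinv, mul_pos hy hy, h1p]
  have h0 : (fun y : ℝ => y^2/2 - y + Real.log (y+1)) 0 = 0 := by simp
  have := hmono (Set.self_mem_Ici) (Set.mem_Ici.2 hx.le) hx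
  rw [h0] at this
  exact this

theorem G_beta_strictMono (d κ : ℝ) (hd : 0 < d) (hκ : 0 < κ) :
    StrictMonoOn
      (fun μ : ℝ =>
        let β := (μ - κ^2 + Real.sqrt ((μ - κ^2)^2 - 4*d*κ^2)) / (2*d)
        (μ/κ^2) * (β^2/2 - β + Real.log (β + 1))
          + (d/κ^2) * (-β^3/3 + β^2/2 - β + Real.log (β + 1)) - β^2/2)
      (Set.Ioi (κ^2 + 2*Real.sqrt d * κ)) := by
  set F : ℝ → ℝ := fun μ : ℝ =>
        (μ/κ^2) * (((μ - κ^2 + Real.sqrt ((μ - κ^2)^2 - 4*d*κ^2)) / (2*d))^2/2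
            - ((μ - κ^2 + Real.sqrt ((μ - κ^2)^2 - 4*d*κ^2)) / (2*d))
            + Real.log (((μ - κ^2 + Real.sqrt ((μ - κ^2)^2 - 4*d*κ^2)) / (2*d)) + 1))
          + (d/κ^2) * (-((μ - κ^2 + Real.sqrt ((μ - κ^2)^2 - 4*d*κ^2)) / (2*d))^3/3
            + ((μ - κ^2 + Real.sqrt ((μ - κ^2)^2 - 4*d*κ^2)) / (2*d))^2/2
            - ((μ - κ^2 + Real.sqrt ((μ - κ^2)^2 - 4*d*κ^2)) / (2*d))
            + Real.log (((μ - κ^2 + Real.sqrt ((μ - κ^2)^2 - 4*d*κ^2)) / (2*d)) + 1))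
          - ((μ - κ^2 + Real.sqrt ((μ - κ^2)^2 - 4*d*κ^2)) / (2*d))^2/2 with hF
  show StrictMonoOn F (Set.Ioi (κ^2 + 2*Real.sqrt d * κ))
  have hκ2 : (0:ℝ) < κ^2 := by positivity
  have key : ∀ μ ∈ Set.Ioi (κ^2 + 2*Real.sqrt d * κ),
      HasDerivAt F
        ((((μ - κ^2 + Real.sqrt ((μ - κ^2)^2 - 4*d*κ^2)) / (2*d))^2/2
          - ((μ - κ^2 + Real.sqrt ((μ - κ^2)^2 - 4*d*κ^2)) / (2*d))
          + Real.log (((μ - κ^2 + Real.sqrt ((μ - κ^2)^2 - 4*d*κ^2)) / (2*d)) + 1))/κ^2) μ := by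
    intro μ hμ
    rw [Set.mem_Ioi] at hμ
    have hsd : 0 < Real.sqrt d := Real.sqrt_pos.2 hd
    have he0 : 0 < μ - κ^2 := by nlinarith
    have hq : 0 < (μ - κ^2)^2 - 4*d*κ^2 := by
      have hsq : Real.sqrt d ^ 2 = d := Real.sq_sqrt hd.le
      have h2 : 2*Real.sqrt d*κ < μ - κ^2 := by linarith
      have h3 := mul_self_lt_mul_self (by positivity) h2
      nlinarith [h3, hsq]
    set s := Real.sqrt ((μ - κ^2)^2 - 4*d*κ^2) with hsdef
    have hs : 0 < s := Real.sqrt_pos.2 hq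
    have hs2 : s^2 = (μ - κ^2)^2 - 4*d*κ^2 := Real.sq_sqrt hq.le
    set b := (μ - κ^2 + s) / (2*d) with hbdef
    have hb : 0 < b := div_pos (by linarith) (by linarith)
    have hb1 : 0 < b + 1 := by linarith
    have hkey : d * b^2 = (μ - κ^2) * b - κ^2 := by
      rw [hbdef]
      field_simp
      nlinarith [hs2]
    -- derivative of inner β
    have hinner : HasDerivAt (fun x : ℝ => (x - κ^2)^2 - 4*d*κ^2) (2*(μ-κ^2)) μ := by
      have h1 : HasDerivAt (fun x : ℝ => x - κ^2) 1 μ := (hasDerivAt_id μ).sub_const _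
      have := (h1.pow 2).sub_const (4*d*κ^2)
      simpa using this
    have hS : HasDerivAt (fun x : ℝ => Real.sqrt ((x - κ^2)^2 - 4*d*κ^2))
        (1/(2*s) * (2*(μ-κ^2))) μ := by
      have := (Real.hasDerivAt_sqrt hq.ne').comp μ hinner
      simpa [hsdef, Function.comp_def] using this
    set b' := (1 + 1/(2*s) * (2*(μ-κ^2))) / (2*d) with hb'def
    have hβ : HasDerivAt (fun x : ℝ => (x - κ^2 + Real.sqrt ((x - κ^2)^2 - 4*d*κ^2)) / (2*d))
        b' μ := by
      exact (((hasDerivAt_id μ).sub_const _).add hS).div_const (2*d)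
    -- derivative of A at b
    have hlogb : HasDerivAt (fun u : ℝ => Real.log (u+1)) (1/(b+1)) b := by
      have := (Real.hasDerivAt_log hb1.ne').comp b ((hasDerivAt_id b).add_const 1)
      simpa [one_div, Function.comp_def] using this
    have hA : HasDerivAt (fun u : ℝ => u^2/2 - u + Real.log (u+1)) (b - 1 + 1/(b+1)) b := by
      have hpow : HasDerivAt (fun u : ℝ => u^2/2) b b := by
        simpa using (hasDerivAt_pow 2 b).div_const 2
      exact (hpow.sub (hasDerivAt_id b)).add hlogb
    have hB : HasDerivAt (fun u : ℝ => -u^3/3 + u^2/2 - u + Real.log (u+1))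
        (-(b^2) + b - 1 + 1/(b+1)) b := by
      have hc : HasDerivAt (fun u : ℝ => -u^3/3) (-(b^2)) b := by
        have h := ((hasDerivAt_pow 3 b).div_const 3).neg
        have heq : (fun u : ℝ => -u^3/3) = (fun u : ℝ => -(u^3/3)) := by
          funext u; ring
        rw [heq]
        refine h.congr_deriv ?_
        push_cast; ring
      have hpow : HasDerivAt (fun u : ℝ => u^2/2) b b := by
        simpa using (hasDerivAt_pow 2 b).div_const 2
      exact ((hc.add hpow).sub (hasDerivAt_id b)).add hlogb
    -- assemble
    have hAc : HasDerivAt (fun x : ℝ =>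
        ((x - κ^2 + Real.sqrt ((x - κ^2)^2 - 4*d*κ^2)) / (2*d))^2/2
          - ((x - κ^2 + Real.sqrt ((x - κ^2)^2 - 4*d*κ^2)) / (2*d))
          + Real.log (((x - κ^2 + Real.sqrt ((x - κ^2)^2 - 4*d*κ^2)) / (2*d)) + 1))
        ((b - 1 + 1/(b+1)) * b') μ := by have := hA.comp μ hβ; exact this
    have hBc : HasDerivAt (fun x : ℝ =>
        -((x - κ^2 + Real.sqrt ((x - κ^2)^2 - 4*d*κ^2)) / (2*d))^3/3
          + ((x - κ^2 + Real.sqrt ((x - κ^2)^2 - 4*d*κ^2)) / (2*d))^2/2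
          - ((x - κ^2 + Real.sqrt ((x - κ^2)^2 - 4*d*κ^2)) / (2*d))
          + Real.log (((x - κ^2 + Real.sqrt ((x - κ^2)^2 - 4*d*κ^2)) / (2*d)) + 1))
        ((-(b^2) + b - 1 + 1/(b+1)) * b') μ := by have := hB.comp μ hβ; exact this
    have hlin : HasDerivAt (fun x : ℝ => x/κ^2) (1/κ^2) μ := by
      simpa using (hasDerivAt_id μ).div_const (κ^2)
    have hsq2 : HasDerivAt (fun x : ℝ =>
        ((x - κ^2 + Real.sqrt ((x - κ^2)^2 - 4*d*κ^2)) / (2*d))^2/2) (b * b') μ := by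
      have := ((hβ.pow 2).div_const 2)
      refine this.congr_deriv ?_
      push_cast; ring
    have hfull : HasDerivAt F
        ((1/κ^2 * (b^2/2 - b + Real.log (b+1)) + μ/κ^2 * ((b - 1 + 1/(b+1)) * b'))
          + (d/κ^2) * ((-(b^2) + b - 1 + 1/(b+1)) * b') - b * b') μ := by
      exact ((hlin.mul hAc).add (hBc.const_mul (d/κ^2))).sub hsq2
    clear_value s b b'
    convert hfull using 1
    have hb1' : b + 1 ≠ 0 := hb1.ne'
    have hκ' : κ ≠ 0 := hκ.ne'
    field_simp
    linear_combination (2*b'*b) * hkey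
  apply strictMonoOn_of_deriv_pos (convex_Ioi _)
  · intro μ hμ
    exact ((key μ hμ).differentiableAt.continuousAt).continuousWithinAt
  · intro μ hμ
    rw [interior_Ioi] at hμ
    rw [(key μ hμ).deriv]
    have hμ' := Set.mem_Ioi.1 hμ
    have hsd : 0 < Real.sqrt d := Real.sqrt_pos.2 hd
    have he0 : 0 < μ - κ^2 := by nlinarith
    have hsn := Real.sqrt_nonneg ((μ - κ^2)^2 - 4*d*κ^2)
    have hb : 0 < (μ - κ^2 + Real.sqrt ((μ - κ^2)^2 - 4*d*κ^2)) / (2*d) :=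
      div_pos (by linarith) (by linarith)
    exact div_pos (aux_A_pos hb) hκ2
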